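/- Let G1 = (V1, E1) and G2 = (V2, E2) be well-formed graphs over the same node type such that the sets V2 \ V1, V1 \ V2, E2 \ E1 and E1 \ E2 are finite. Then the application of Δ(G1, G2) is order-independent: for every sequence enumerating each operation of Δ(G1, G2) exactly once, in any order, applying that sequence to G1 yields G2. -/

import Mathlib

/-- A graph over a node type `α`: a set of nodes and a set of edges
(unordered pairs of nodes). -/
structure UpdGraph (α : Type*) where
  V : Set α
  E : Set (Sym2 α)

/-- A graph is well-formed if its edges are pairs of *distinct* nodes and
both endpoints of every edge belong to the node set. -/
def UpdGraph.WellFormed {α : Type*} (G : UpdGraph α) : Prop :=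
  (∀ e ∈ G.E, ¬ e.IsDiag) ∧ ∀ e ∈ G.E, ∀ v ∈ e, v ∈ G.V

/-- Update operations on graphs. -/
inductive Op (α : Type*) where
  | addNode (v : α)
  | remNode (v : α)
  | addEdge (e : Sym2 α)
  | remEdge (e : Sym2 α)

/-- The delta Δ(G1, G2). -/
def delta {α : Type*} (G1 G2 : UpdGraph α) : Set (Op α) :=
  (Op.addNode '' (G2.V \ G1.V)) ∪ (Op.remNode '' (G1.V \ G2.V)) ∪
  (Op.addEdge '' (G2.E \ G1.E)) ∪
  (Op.remEdge '' {e | e ∈ G1.E \ G2.E ∧ ∀ v ∈ e, v ∈ G2.V})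

/-- The result of applying a set `S` of operations to a graph `G` in the order:
first all `remEdge` operations, then all `remNode` operations
(each of which removes the node and its incident edges),
then all `addNode` operations, then all `addEdge` operations. -/
def applyDelta {α : Type*} (S : Set (Op α)) (G : UpdGraph α) : UpdGraph α :=
  ⟨(G.V \ {v | Op.remNode v ∈ S}) ∪ {v | Op.addNode v ∈ S},
   {e ∈ G.E | Op.remEdge e ∉ S ∧ ∀ v ∈ e, Op.remNode v ∉ S} ∪ {e | Op.addEdge e ∈ S}⟩
/-- Applying a sequence of operations to a graph, from left to right. -/
def applySeq {α : Type*} (G : UpdGraph α) (l : List (Op α)) : UpdGraph α :=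
  l.foldl (fun H op =>
    match op with
    | Op.addNode v => ⟨H.V ∪ {v}, H.E⟩
    | Op.remNode v => ⟨H.V \ {v}, {e ∈ H.E | v ∉ e}⟩
    | Op.addEdge e => ⟨H.V, H.E ∪ {e}⟩
    | Op.remEdge e => ⟨H.V, H.E \ {e}⟩) G

section Aux
variable {α : Type*}

lemma mem_delta_addNode {G1 G2 : UpdGraph α} {v : α} :
    Op.addNode v ∈ delta G1 G2 ↔ v ∈ G2.V ∧ v ∉ G1.V := by simp [delta]

lemma mem_delta_remNode {G1 G2 : UpdGraph α} {v : α} :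
    Op.remNode v ∈ delta G1 G2 ↔ v ∈ G1.V ∧ v ∉ G2.V := by simp [delta]

lemma mem_delta_addEdge {G1 G2 : UpdGraph α} {e : Sym2 α} :
    Op.addEdge e ∈ delta G1 G2 ↔ e ∈ G2.E ∧ e ∉ G1.E := by simp [delta]

lemma mem_delta_remEdge {G1 G2 : UpdGraph α} {e : Sym2 α} :
    Op.remEdge e ∈ delta G1 G2 ↔ (e ∈ G1.E ∧ e ∉ G2.E) ∧ ∀ v ∈ e, v ∈ G2.V := by
  constructor
  · intro h
    simp only [delta, Set.mem_union, Set.mem_image, Set.mem_setOf_eq] at h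
    rcases h with ((⟨x, _, hx⟩ | ⟨x, _, hx⟩) | ⟨x, _, hx⟩) | ⟨x, hx, hxe⟩
    · cases hx
    · cases hx
    · cases hx
    · cases hxe; exact ⟨⟨hx.1.1, hx.1.2⟩, hx.2⟩
  · intro h
    exact Or.inr ⟨e, ⟨⟨h.1.1, h.1.2⟩, h.2⟩, rfl⟩

def stepOp (H : UpdGraph α) (op : Op α) : UpdGraph α :=
  match op with
  | Op.addNode v => ⟨H.V ∪ {v}, H.E⟩
  | Op.remNode v => ⟨H.V \ {v}, {e ∈ H.E | v ∉ e}⟩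
  | Op.addEdge e => ⟨H.V, H.E ∪ {e}⟩
  | Op.remEdge e => ⟨H.V, H.E \ {e}⟩

lemma applySeq_append_singleton (G : UpdGraph α) (l : List (Op α)) (op : Op α) :
    applySeq G (l ++ [op]) = stepOp (applySeq G l) op := by
  simp only [applySeq, List.foldl_append, List.foldl_cons, List.foldl_nil]
  cases op <;> rfl

lemma forall_mem_not_or {e : Sym2 α} {P : α → Prop} {v : α} :
    (∀ w ∈ e, ¬(P w ∨ w = v)) ↔ (∀ w ∈ e, ¬ P w) ∧ v ∉ e :=
  ⟨fun h => ⟨fun w hw hp => h w hw (Or.inl hp), fun hv => h v hv (Or.inr rfl)⟩,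
   fun h w hw => fun hh => hh.elim (h.1 w hw) (fun hwv => h.2 (hwv ▸ hw))⟩

lemma step_applyDelta {G1 G2 : UpdGraph α} (h1 : G1.WellFormed) (h2 : G2.WellFormed)
    (S : Set (Op α)) (hS : S ⊆ delta G1 G2) (op : Op α) (hop : op ∈ delta G1 G2) :
    stepOp (applyDelta S G1) op = applyDelta (S ∪ {op}) G1 := by
  cases op with
  | addNode v =>
    obtain ⟨hv2, hv1⟩ := mem_delta_addNode.mp hop
    simp only [stepOp, applyDelta, UpdGraph.mk.injEq]
    constructor
    · ext w
      by_cases hw : w = v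
      · subst hw
        simp [Set.mem_union, Set.mem_setOf_eq]
      · simp only [Set.mem_union, Set.mem_diff, Set.mem_setOf_eq, Set.mem_singleton_iff,
          Op.addNode.injEq, Op.remNode.injEq, hw, reduceCtorEq, or_false]
    · ext f
      simp only [Set.mem_union, Set.mem_setOf_eq, Set.mem_singleton_iff, reduceCtorEq, or_false]
  | remNode v =>
    obtain ⟨hv1, hv2⟩ := mem_delta_remNode.mp hop
    have hA : Op.addNode v ∉ S := fun h => (mem_delta_addNode.mp (hS h)).2 hv1
    simp only [stepOp, applyDelta, UpdGraph.mk.injEq]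
    constructor
    · ext w
      by_cases hw : w = v
      · subst hw
        simp [Set.mem_union, Set.mem_setOf_eq, hA]
      · simp only [Set.mem_union, Set.mem_diff, Set.mem_setOf_eq, Set.mem_singleton_iff,
          Op.addNode.injEq, Op.remNode.injEq, hw, reduceCtorEq, or_false]
        tauto
    · ext f
      have hE : Op.addEdge f ∈ S → v ∉ f := fun h hv =>
        hv2 (h2.2 f (mem_delta_addEdge.mp (hS h)).1 v hv)
      simp only [Set.mem_union, Set.mem_setOf_eq, Set.mem_singleton_iff,
        Op.remNode.injEq, reduceCtorEq, or_false]
      rw [forall_mem_not_or]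
      tauto
  | addEdge e =>
    obtain ⟨he2, he1⟩ := mem_delta_addEdge.mp hop
    simp only [stepOp, applyDelta, UpdGraph.mk.injEq]
    constructor
    · ext w
      simp only [Set.mem_union, Set.mem_diff, Set.mem_setOf_eq, Set.mem_singleton_iff,
        reduceCtorEq, or_false]
    · ext f
      simp only [Set.mem_union, Set.mem_setOf_eq, Set.mem_singleton_iff,
        Op.addEdge.injEq, reduceCtorEq, or_false]
      tauto
  | remEdge e =>
    obtain ⟨⟨he1, he2⟩, hve⟩ := mem_delta_remEdge.mp hop
    have hA : Op.addEdge e ∉ S := fun h => (mem_delta_addEdge.mp (hS h)).2 he1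
    simp only [stepOp, applyDelta, UpdGraph.mk.injEq]
    constructor
    · ext w
      simp only [Set.mem_union, Set.mem_diff, Set.mem_setOf_eq, Set.mem_singleton_iff,
        reduceCtorEq, or_false]
    · ext f
      by_cases hf : f = e
      · subst hf
        simp only [Set.mem_diff, Set.mem_union, Set.mem_setOf_eq, Set.mem_singleton_iff,
          Op.remEdge.injEq, reduceCtorEq, or_false, or_true, hA]
        tauto
      · simp only [Set.mem_diff, Set.mem_union, Set.mem_setOf_eq, Set.mem_singleton_iff,
          Op.remEdge.injEq, reduceCtorEq, or_false, hf]
        tauto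

lemma applyDelta_empty (G : UpdGraph α) : applyDelta (∅ : Set (Op α)) G = G := by
  simp [applyDelta]

lemma applySeq_eq_applyDelta {G1 G2 : UpdGraph α} (h1 : G1.WellFormed) (h2 : G2.WellFormed) :
    ∀ l : List (Op α), (∀ o ∈ l, o ∈ delta G1 G2) →
      applySeq G1 l = applyDelta {o | o ∈ l} G1 := by
  intro l
  induction l using List.reverseRecOn with
  | nil => intro _; simpa [applySeq] using (applyDelta_empty G1).symm
  | append_singleton l op ih =>
    intro hsub
    have hl : ∀ o ∈ l, o ∈ delta G1 G2 := fun o ho => hsub o (by simp [ho])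
    have hstep := step_applyDelta h1 h2 ({o | o ∈ l}) hl op (hsub op (by simp))
    rw [applySeq_append_singleton, ih hl, hstep]
    congr 1
    ext o
    simp only [Set.mem_union, Set.mem_setOf_eq, Set.mem_singleton_iff, List.mem_append,
      List.mem_singleton]

lemma applyDelta_delta {G1 G2 : UpdGraph α} (h1 : G1.WellFormed) (h2 : G2.WellFormed) :
    applyDelta (delta G1 G2) G1 = G2 := by
  have hV : ((G1.V \ {v | Op.remNode v ∈ delta G1 G2}) ∪ {v | Op.addNode v ∈ delta G1 G2})
      = G2.V := by
    ext v
    simp only [Set.mem_union, Set.mem_diff, Set.mem_setOf_eq, mem_delta_addNode,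
      mem_delta_remNode]
    by_cases hv : v ∈ G1.V <;> simp [hv] <;> tauto
  have hE : ({e ∈ G1.E | Op.remEdge e ∉ delta G1 G2 ∧ ∀ v ∈ e, Op.remNode v ∉ delta G1 G2}
      ∪ {e | Op.addEdge e ∈ delta G1 G2}) = G2.E := by
    ext e
    simp only [Set.mem_union, Set.mem_setOf_eq, mem_delta_addEdge, mem_delta_remEdge,
      mem_delta_remNode]
    constructor
    · rintro (⟨he, hr, hn⟩ | ⟨ha, _⟩)
      · by_contra he2
        exact hr ⟨⟨he, he2⟩, fun v hv => by
          by_contra hv2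
          exact hn v hv ⟨h1.2 e he v hv, hv2⟩⟩
      · exact ha
    · intro he2
      by_cases he1 : e ∈ G1.E
      · exact Or.inl ⟨he1, fun h => h.1.2 he2,
          fun v hv h => h.2 (h2.2 e he2 v hv)⟩
      · exact Or.inr ⟨he2, he1⟩
  cases G2 with
  | mk V2 E2 => exact congrArg₂ UpdGraph.mk hV hE

end Aux

/-- The application of Δ(G1, G2) is order-independent: any sequence enumerating
each operation of Δ(G1, G2) exactly once, in any order, applied to G1 yields G2. -/
theorem delta_order_independent {α : Type*} (G1 G2 : UpdGraph α)
    (h1 : G1.WellFormed) (h2 : G2.WellFormed)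
    (hfV₁ : (G2.V \ G1.V).Finite) (hfV₂ : (G1.V \ G2.V).Finite)
    (hfE₁ : (G2.E \ G1.E).Finite) (hfE₂ : (G1.E \ G2.E).Finite) :
    ∀ l : List (Op α), l.Nodup → (∀ o : Op α, o ∈ l ↔ o ∈ delta G1 G2) →
      applySeq G1 l = G2 := by
  intro l _ hmem
  have hset : {o : Op α | o ∈ l} = delta G1 G2 := by ext o; exact hmem o
  rw [applySeq_eq_applyDelta h1 h2 l (fun o ho => (hmem o).mp ho), hset,
    applyDelta_delta h1 h2]
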